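/- Let n, r be positive integers with r ≤ n, let 2 ≤ d_1 ≤ ... ≤ d_r, and let α_r = r + (n - d_1 - ... - d_r)/d_r. Suppose d_1 + ... + d_r ≤ n. Then for all real b_0 > 0 and all reals b_1, ..., b_r ≥ 0 with b_r = 0, setting a = min_{1 ≤ j ≤ r} (b_0 d_j + b_j), one has n b_0 + b_1 + ... + b_r ≥ α_r · a. -/

import Mathlib

open Finset

/-- key inequality (ineq8): if `∑ d j ≤ n` and `b r = 0`, then
`n b 0 + b 1 + ... + b r ≥ α_r ⬝ min_j (b 0 * d j + b j)`. -/
theorem stmt_6 (n r : ℕ) (hn : 0 < n) (hr : 0 < r) (hrn : r ≤ n)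
    (d : Fin r → ℕ) (hd : ∀ i, 2 ≤ d i) (hmono : Monotone d)
    (hsum : ∑ i, d i ≤ n)
    (αr : ℝ)
    (hαr : αr = (r : ℝ) + ((n : ℝ) - ∑ i, (d i : ℝ)) / (d ⟨r - 1, by omega⟩ : ℝ))
    (b0 : ℝ) (hb0 : 0 < b0) (b : Fin r → ℝ) (hb : ∀ j, 0 ≤ b j)
    (hbr : b ⟨r - 1, by omega⟩ = 0)
    (a : ℝ)
    (ha : a = Finset.univ.inf'
      (Finset.univ_nonempty_iff.mpr ⟨⟨0, hr⟩⟩) (fun j : Fin r => b0 * (d j : ℝ) + b j)) :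
    (n : ℝ) * b0 + ∑ j, b j ≥ αr * a := by
  have h1 : ∀ j : Fin r, a ≤ b0 * (d j : ℝ) + b j := by
    intro j
    rw [ha]
    exact Finset.inf'_le _ (Finset.mem_univ j)
  set last : Fin r := ⟨r - 1, by omega⟩ with hlast
  have hdlast : (0 : ℝ) < (d last : ℝ) := by
    have := hd last; positivity
  have h3 : a ≤ b0 * (d last : ℝ) := by
    have := h1 last; rw [hbr] at this; linarith
  set S : ℝ := ∑ i, (d i : ℝ) with hS
  have hSn : S ≤ (n : ℝ) := by
    rw [hS, ← Nat.cast_sum]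
    exact_mod_cast hsum
  have h2 : (r : ℝ) * a ≤ b0 * S + ∑ j, b j := by
    have : ∑ _j : Fin r, a ≤ ∑ j, (b0 * (d j : ℝ) + b j) :=
      Finset.sum_le_sum fun j _ => h1 j
    simp only [Finset.sum_const, Finset.card_univ, Fintype.card_fin, nsmul_eq_mul,
      Finset.sum_add_distrib, ← Finset.mul_sum] at this
    linarith [this]
  have hc : (0 : ℝ) ≤ ((n : ℝ) - S) / (d last : ℝ) := by
    apply div_nonneg (by linarith) hdlast.le
  have h4 : ((n : ℝ) - S) / (d last : ℝ) * a ≤ ((n : ℝ) - S) * b0 := by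
    calc ((n : ℝ) - S) / (d last : ℝ) * a
        ≤ ((n : ℝ) - S) / (d last : ℝ) * (b0 * (d last : ℝ)) :=
          mul_le_mul_of_nonneg_left h3 hc
      _ = ((n : ℝ) - S) * b0 := by field_simp
  rw [hαr]
  have : ((r : ℝ) + ((n : ℝ) - S) / (d last : ℝ)) * a
      = (r : ℝ) * a + ((n : ℝ) - S) / (d last : ℝ) * a := by ring
  rw [this]
  linarith
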